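/- There exists a computable functional unit for ℕ that is universal, i.e. a computable functional unit H for ℕ such that L ≤ H for every computable functional unit L for ℕ. -/

import Mathlib

/-- Primitive instructions: plain basic `f.m`, positive test `+f.m`, negative test `-f.m`
(method names are natural numbers, there is a single focus `f`), forward jump `#l`,
backward jump `\l`, and the positive/negative termination instructions `!t` / `!f`. -/
inductive Instr : Type where
  | basic (m : ℕ)
  | postest (m : ℕ)
  | negtest (m : ℕ)
  | fjump (l : ℕ)
  | bjump (l : ℕ)
  | haltT
  | haltF
deriving DecidableEq

/-- A functional unit for a state space `S`: a finite, functional set of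
(method name, method operation) pairs, where a method operation is a total
function `S → Bool × S`. -/
structure FU (S : Type*) where
  carrier : Set (ℕ × (S → Bool × S))
  finite : carrier.Finite
  functional : ∀ {m : ℕ} {M M' : S → Bool × S},
    (m, M) ∈ carrier → (m, M') ∈ carrier → M = M'

/-- The interface of a functional unit: the set of method names occurring in it. -/
def FU.iface {S : Type*} (H : FU S) : Set ℕ := {m | ∃ M, (m, M) ∈ H.carrier}

/-- The method operation named `m` in `H` (an arbitrary fixed value if `m ∉ I(H)`). -/
noncomputable def FU.op {S : Type*} (H : FU S) (m : ℕ) (s : S) : Bool × S :=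
  letI := Classical.propDecidable
  if h : ∃ M, (m, M) ∈ H.carrier then h.choose s else (true, s)

/-- The restriction `⟨I, H⟩` of a functional unit to a set `I` of method names. -/
def FU.restrict {S : Type*} (H : FU S) (I : Set ℕ) : FU S where
  carrier := {p ∈ H.carrier | p.1 ∈ I}
  finite := H.finite.subset (Set.sep_subset _ _)
  functional := fun hM hM' => H.functional hM.1 hM'.1

/-- The method names used by an instruction all belong to `I`. -/
def Instr.namesIn (I : Set ℕ) : Instr → Prop
  | .basic m => m ∈ I
  | .postest m => m ∈ I
  | .negtest m => m ∈ I
  | _ => True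

/-- An instruction sequence over a set `I` of method names: a finite nonempty list of
primitive instructions whose method names belong to `I`. -/
def InstrSeqOver (I : Set ℕ) (x : List Instr) : Prop :=
  x ≠ [] ∧ ∀ u ∈ x, u.namesIn I

/-- `Exec H x i s b s'` : execution of the instruction sequence `x` on the functional
unit `H`, from (0-based) position `i` in state `s`, terminates delivering the Boolean
value `b` with final state `s'`.  (Position `i` here corresponds to the 1-based
position `i+1`; positions outside the sequence, jumps `#0`/`\0`, and infinite
executions admit no derivation, i.e. execution does not terminate.) -/
inductive Exec {S : Type*} (H : FU S) (x : List Instr) : ℕ → S → Bool → S → Prop where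
  | basic {i : ℕ} {s : S} {b : Bool} {s' : S} (m : ℕ)
      (hu : x[i]? = some (Instr.basic m))
      (h : Exec H x (i + 1) (H.op m s).2 b s') : Exec H x i s b s'
  | posT {i : ℕ} {s : S} {b : Bool} {s' : S} (m : ℕ)
      (hu : x[i]? = some (Instr.postest m)) (hr : (H.op m s).1 = true)
      (h : Exec H x (i + 1) (H.op m s).2 b s') : Exec H x i s b s'
  | posF {i : ℕ} {s : S} {b : Bool} {s' : S} (m : ℕ)
      (hu : x[i]? = some (Instr.postest m)) (hr : (H.op m s).1 = false)
      (h : Exec H x (i + 2) (H.op m s).2 b s') : Exec H x i s b s'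
  | negT {i : ℕ} {s : S} {b : Bool} {s' : S} (m : ℕ)
      (hu : x[i]? = some (Instr.negtest m)) (hr : (H.op m s).1 = true)
      (h : Exec H x (i + 2) (H.op m s).2 b s') : Exec H x i s b s'
  | negF {i : ℕ} {s : S} {b : Bool} {s' : S} (m : ℕ)
      (hu : x[i]? = some (Instr.negtest m)) (hr : (H.op m s).1 = false)
      (h : Exec H x (i + 1) (H.op m s).2 b s') : Exec H x i s b s'
  | fjump {i : ℕ} {s : S} {b : Bool} {s' : S} (l : ℕ)
      (hu : x[i]? = some (Instr.fjump l))
      (h : Exec H x (i + l) s b s') : Exec H x i s b s'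
  | bjump {i : ℕ} {s : S} {b : Bool} {s' : S} (l : ℕ)
      (hu : x[i]? = some (Instr.bjump l)) (hl : l ≤ i)
      (h : Exec H x (i - l) s b s') : Exec H x i s b s'
  | haltT {i : ℕ} {s : S} (hu : x[i]? = some Instr.haltT) : Exec H x i s true s
  | haltF {i : ℕ} {s : S} (hu : x[i]? = some Instr.haltF) : Exec H x i s false s

/-- `M` is a derived method operation of `H`: there is an instruction sequence `x`
over `I(H)` whose produced partial method operation `⌈x⌉_H` is total and equals `M`. -/
def DerivedOp {S : Type*} (H : FU S) (M : S → Bool × S) : Prop :=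
  ∃ x : List Instr, InstrSeqOver H.iface x ∧ ∀ s, Exec H x 0 s (M s).1 (M s).2

/-- `H ≤ H'` : every method operation of `H` is a derived method operation of `H'`. -/
def FU.le {S : Type*} (H H' : FU S) : Prop :=
  ∀ m M, (m, M) ∈ H.carrier → DerivedOp H' M

/-- `H ≡ H'` : `H ≤ H'` and `H' ≤ H`. -/
def FU.equiv {S : Type*} (H H' : FU S) : Prop := FU.le H H' ∧ FU.le H' H

/-- A method operation on ℕ is computable if both its components are. -/
def ComputableMO (M : ℕ → Bool × ℕ) : Prop :=
  Computable (fun n => (M n).1) ∧ Computable (fun n => (M n).2)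

/-- A functional unit for ℕ is computable if all its method operations are. -/
def ComputableFU (H : FU ℕ) : Prop :=
  ∀ m M, (m, M) ∈ H.carrier → ComputableMO M

open Nat.Partrec (Code)
open Nat.Partrec.Code

/-- init -/
def UM0 : ℕ → Bool × ℕ := fun n => (true, Nat.pair 0 (Nat.pair n 0))
/-- increment code index -/
def UM1 : ℕ → Bool × ℕ := fun s => (true, Nat.pair (s.unpair.1 + 1) s.unpair.2)
/-- one simulation step -/
def UM2 : ℕ → Bool × ℕ := fun s =>
  let o := evaln s.unpair.2.unpair.2 (Denumerable.ofNat Code s.unpair.1) s.unpair.2.unpair.1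
  (o.isSome, o.getD (Nat.pair s.unpair.1 (Nat.pair s.unpair.2.unpair.1 (s.unpair.2.unpair.2 + 1))))
/-- finalize -/
def UM3 : ℕ → Bool × ℕ := fun s => (decide (s.unpair.1 = 0), s.unpair.2)

/-- The universal functional unit. -/
def Huniv : FU ℕ where
  carrier := {(0, UM0), (1, UM1), (2, UM2), (3, UM3)}
  finite := (((Set.finite_singleton _).insert _).insert _).insert _
  functional := by
    intro m M M' h h'
    simp only [Set.mem_insert_iff, Set.mem_singleton_iff, Prod.mk.injEq] at h h'
    rcases h with ⟨rfl, rfl⟩ | ⟨rfl, rfl⟩ | ⟨rfl, rfl⟩ | ⟨rfl, rfl⟩ <;> simp_all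

lemma Huniv_op {m : ℕ} {M : ℕ → Bool × ℕ} (h : (m, M) ∈ Huniv.carrier) :
    Huniv.op m = M := by
  have hex : ∃ M', (m, M') ∈ Huniv.carrier := ⟨M, h⟩
  funext s
  unfold FU.op
  rw [dif_pos hex, Huniv.functional hex.choose_spec h]

lemma Huniv_mem0 : ((0 : ℕ), UM0) ∈ Huniv.carrier := by simp [Huniv]
lemma Huniv_mem1 : ((1 : ℕ), UM1) ∈ Huniv.carrier := by simp [Huniv]
lemma Huniv_mem2 : ((2 : ℕ), UM2) ∈ Huniv.carrier := by simp [Huniv]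
lemma Huniv_mem3 : ((3 : ℕ), UM3) ∈ Huniv.carrier := by simp [Huniv]

/-- There exists a universal computable functional unit for ℕ. -/
theorem exists_universal_computable_fu :
    ∃ H : FU ℕ, ComputableFU H ∧ ∀ L : FU ℕ, ComputableFU L → FU.le L H := by
  refine ⟨Huniv, ?_, ?_⟩
  · -- computability of the four method operations
    have hu1 : Primrec fun s : ℕ => s.unpair.1 := Primrec.fst.comp Primrec.unpair
    have hu2 : Primrec fun s : ℕ => s.unpair.2 := Primrec.snd.comp Primrec.unpair
    have hn : Primrec fun s : ℕ => s.unpair.2.unpair.1 :=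
      Primrec.fst.comp (Primrec.unpair.comp hu2)
    have ht : Primrec fun s : ℕ => s.unpair.2.unpair.2 :=
      Primrec.snd.comp (Primrec.unpair.comp hu2)
    have hP : Primrec₂ Nat.pair := Primrec₂.natPair
    have ho : Primrec fun s : ℕ =>
        evaln s.unpair.2.unpair.2 (Denumerable.ofNat Code s.unpair.1) s.unpair.2.unpair.1 :=
      primrec_evaln.comp (Primrec.pair (Primrec.pair ht ((Primrec.ofNat Code).comp hu1)) hn)
    intro m M hM
    simp only [Huniv, Set.mem_insert_iff, Set.mem_singleton_iff, Prod.mk.injEq] at hM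
    rcases hM with ⟨rfl, rfl⟩ | ⟨rfl, rfl⟩ | ⟨rfl, rfl⟩ | ⟨rfl, rfl⟩
    · exact ⟨Computable.const true,
        Primrec.to_comp (hP.comp (Primrec.const 0) (hP.comp Primrec.id (Primrec.const 0)))⟩
    · exact ⟨Computable.const true,
        Primrec.to_comp (hP.comp (Primrec.succ.comp hu1) hu2)⟩
    · constructor
      · exact Primrec.to_comp (Primrec.option_isSome.comp ho)
      · exact Primrec.to_comp (Primrec.option_getD.comp ho
          (hP.comp hu1 (hP.comp hn (Primrec.succ.comp ht))))
    · exact ⟨Primrec.to_comp ((Primrec.eq.comp hu1 (Primrec.const 0)).decide), Primrec.to_comp hu2⟩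
  · -- universality
    intro L hL m M hM
    obtain ⟨hF, hG⟩ := hL m M hM
    -- the combined total function and its code
    set h : ℕ → ℕ := fun n => Nat.pair (cond (M n).1 0 1) (M n).2 with hh
    have hcomp : Computable h := by
      apply Computable.comp (f := fun p : Bool × ℕ => Nat.pair (cond p.1 0 1) p.2)
      · exact Primrec.to_comp (Primrec₂.natPair.comp
          (Primrec.cond Primrec.fst (Primrec.const 0) (Primrec.const 1)) Primrec.snd)
      · exact hF.pair hG
    have hpart : Nat.Partrec fun n => Part.some (h n) := by
      have := hcomp.partrec
      rwa [Partrec.nat_iff] at this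
    obtain ⟨c, hc⟩ := exists_code.1 hpart
    obtain ⟨e, rfl⟩ : ∃ e : ℕ, Denumerable.ofNat Code e = c :=
      ⟨Encodable.encode c, Denumerable.ofNat_encode c⟩
    set cc := Denumerable.ofNat Code e with hcc
    have hev : ∀ n, ∃ k, evaln k cc n = some (h n) := by
      intro n
      have : h n ∈ eval cc n := by rw [hc]; exact Part.mem_some _
      exact evaln_complete.1 this
    -- the instruction sequence
    set x : List Instr := Instr.basic 0 :: (List.replicate e (Instr.basic 1) ++
      [Instr.negtest 2, Instr.bjump 1, Instr.postest 3, Instr.haltT, Instr.haltF]) with hx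
    -- indexing facts
    have hx0 : x[0]? = some (Instr.basic 0) := by rw [hx]; exact List.getElem?_cons_zero
    have hxinc : ∀ j, j < e → x[j + 1]? = some (Instr.basic 1) := by
      intro j hj
      rw [hx, List.getElem?_cons_succ, List.getElem?_append_left (by simpa using hj)]
      simp [hj]
    have hxtail : ∀ r : ℕ, x[e + 1 + r]? =
        [Instr.negtest 2, Instr.bjump 1, Instr.postest 3, Instr.haltT, Instr.haltF][r]? := by
      intro r
      have : e + 1 + r = (e + r) + 1 := by omega
      rw [this]
      simp only [hx, List.getElem?_cons_succ]
      rw [List.getElem?_append_right (by simp)]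
      simp
    -- op rewrites
    have op0 := Huniv_op Huniv_mem0
    have op1 := Huniv_op Huniv_mem1
    have op2 := Huniv_op Huniv_mem2
    have op3 := Huniv_op Huniv_mem3
    refine ⟨x, ⟨by simp [hx], ?_⟩, ?_⟩
    · intro u hu
      rw [hx] at hu
      simp only [List.mem_cons, List.mem_append, List.mem_replicate,
        List.not_mem_nil, or_false] at hu
      rcases hu with rfl | ⟨_, rfl⟩ | rfl | rfl | rfl | rfl | rfl
      · exact ⟨UM0, Huniv_mem0⟩
      · exact ⟨UM1, Huniv_mem1⟩
      · exact ⟨UM2, Huniv_mem2⟩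
      · trivial
      · exact ⟨UM3, Huniv_mem3⟩
      · trivial
      · trivial
    · intro n
      have v_eq : h n = Nat.pair (cond (M n).1 0 1) (M n).2 := rfl
      -- tail execution: from position e+3 in state h n
      have tailExec : Exec Huniv x (e + 3) (h n) (M n).1 (M n).2 := by
        have hu3 : x[e + 3]? = some (Instr.postest 3) := by
          have := hxtail 2; simpa [show e + 1 + 2 = e + 3 by omega] using this
        have hval : Huniv.op 3 (h n) = (decide ((h n).unpair.1 = 0), (h n).unpair.2) := by
          rw [op3]; rfl
        cases hMb : (M n).1
        · -- false: b' = 1, go to haltF at e+5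
          apply Exec.posF 3 hu3
          · rw [hval]; simp [v_eq, hMb]
          · have : (Huniv.op 3 (h n)).2 = (M n).2 := by rw [hval]; simp [v_eq]
            rw [this]
            have hu5 : x[e + 3 + 2]? = some Instr.haltF := by
              have := hxtail 4; simpa [show e + 1 + 4 = e + 3 + 2 by omega] using this
            exact Exec.haltF hu5
        · -- true: b' = 0, go to haltT at e+4
          apply Exec.posT 3 hu3
          · rw [hval]; simp [v_eq, hMb]
          · have : (Huniv.op 3 (h n)).2 = (M n).2 := by rw [hval]; simp [v_eq]
            rw [this]
            have hu4 : x[e + 3 + 1]? = some Instr.haltT := by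
              have := hxtail 3; simpa [show e + 1 + 3 = e + 3 + 1 by omega] using this
            exact Exec.haltT hu4
      obtain ⟨k, hk⟩ := hev n
      -- loop: from position e+1 in state pair e (pair n t)
      have loop : ∀ j t, k ≤ t + j →
          Exec Huniv x (e + 1) (Nat.pair e (Nat.pair n t)) (M n).1 (M n).2 := by
        intro j
        induction j with
        | zero =>
          intro t htk
          simp only [Nat.add_zero] at htk
          have hsome : evaln t cc n = some (h n) := Option.mem_def.1 (evaln_mono htk (Option.mem_def.2 hk))
          have hu2 : x[e + 1]? = some (Instr.negtest 2) := by
            have := hxtail 0; simpa using this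
          apply Exec.negT 2 hu2
          · rw [op2]; simp [UM2, hsome, ← hcc]
          · have : (Huniv.op 2 (Nat.pair e (Nat.pair n t))).2 = h n := by
              rw [op2]; simp [UM2, hsome, ← hcc]
            rw [this]
            exact tailExec
        | succ j ih =>
          intro t htk
          have hu2 : x[e + 1]? = some (Instr.negtest 2) := by
            have := hxtail 0; simpa using this
          cases hsome : evaln t cc n with
          | some w =>
            have hw : w = h n := by
              rcases le_total t k with hle | hle
              · have := Option.mem_def.1 (evaln_mono hle (Option.mem_def.2 hsome))
                rw [hk] at this; exact (Option.some.inj this).symm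
              · have := Option.mem_def.1 (evaln_mono hle (Option.mem_def.2 hk))
                rw [hsome] at this; exact Option.some.inj this
            subst hw
            apply Exec.negT 2 hu2
            · rw [op2]; simp [UM2, hsome, ← hcc]
            · have : (Huniv.op 2 (Nat.pair e (Nat.pair n t))).2 = h n := by
                rw [op2]; simp [UM2, hsome, ← hcc]
              rw [this]
              exact tailExec
          | none =>
            apply Exec.negF 2 hu2
            · rw [op2]; simp [UM2, hsome, ← hcc]
            · have hst : (Huniv.op 2 (Nat.pair e (Nat.pair n t))).2 =
                  Nat.pair e (Nat.pair n (t + 1)) := by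
                rw [op2]; simp [UM2, hsome, ← hcc]
              rw [hst]
              have hb : x[e + 1 + 1]? = some (Instr.bjump 1) := by
                have := hxtail 1; simpa using this
              apply Exec.bjump 1 hb (by omega)
              have : e + 1 + 1 - 1 = e + 1 := by omega
              rw [this]
              exact ih (t + 1) (by omega)
      -- increments: from position j+1 in state pair j (pair n 0)
      have incs : ∀ d j, j + d = e →
          Exec Huniv x (j + 1) (Nat.pair j (Nat.pair n 0)) (M n).1 (M n).2 := by
        intro d
        induction d with
        | zero =>
          intro j hj
          simp only [Nat.add_zero] at hj
          subst hj
          exact loop k 0 (by omega)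
        | succ d ih =>
          intro j hj
          have hj' : j < e := by omega
          apply Exec.basic 1 (hxinc j hj')
          have : (Huniv.op 1 (Nat.pair j (Nat.pair n 0))).2 =
              Nat.pair (j + 1) (Nat.pair n 0) := by rw [op1]; simp [UM1]
          rw [this]
          exact ih (j + 1) (by omega)
      -- full execution
      apply Exec.basic 0 hx0
      have : (Huniv.op 0 n).2 = Nat.pair 0 (Nat.pair n 0) := by rw [op0]; rfl
      rw [this]
      exact incs e 0 (by omega)
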